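/- Let S, L ∈ ℝ^{m×n} with Supp(S* − S) ⊆ Supp(S*), set E = S* − S, G = Σ_{i=1}^n Q_i Q_iᵀ(L − L*)e_i e_iᵀ, F = Σ_{i=1}^n Q_i Q_iᵀ(S − S*)e_i e_iᵀ, M = F + G + E, s = ‖E‖_{ℓ∞}, and l = max_i ‖G e_i‖_{ℓ2}. Then for every v ∈ ℝ^n: ‖M v‖_{ℓ∞} ≤ [ ν√(d/m)·l + (α₂ + α₁ν²d)·s ]·n·‖v‖_{ℓ∞}. -/

import Mathlib

open Matrix
open scoped BigOperators

noncomputable def l2 {n : ℕ} (v : Fin n → ℝ) : ℝ := Real.sqrt (∑ i, v i ^ 2)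

noncomputable def vinf {n : ℕ} (v : Fin n → ℝ) : ℝ := ⨆ i, |v i|

noncomputable def linf {m n : ℕ} (X : Matrix (Fin m) (Fin n) ℝ) : ℝ := ⨆ i, ⨆ j, |X i j|

noncomputable def frob {m n : ℕ} (X : Matrix (Fin m) (Fin n) ℝ) : ℝ :=
  Real.sqrt (∑ i, ∑ j, X i j ^ 2)

noncomputable def spec {m n : ℕ} (X : Matrix (Fin m) (Fin n) ℝ) : ℝ :=
  ‖LinearMap.toContinuousLinearMap (Matrix.toEuclideanLin X)‖

def supp {m n : ℕ} (X : Matrix (Fin m) (Fin n) ℝ) : Set (Fin m × Fin n) :=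
  {p | X p.1 p.2 ≠ 0}

noncomputable def sthr {m n : ℕ} (ζ : ℝ) (X : Matrix (Fin m) (Fin n) ℝ) :
    Matrix (Fin m) (Fin n) ℝ :=
  Matrix.of fun i j => Real.sign (X i j) * max (|X i j| - ζ) 0

lemma l2_nonneg' {n : ℕ} (v : Fin n → ℝ) : 0 ≤ l2 v := Real.sqrt_nonneg _

lemma abs_sum_mul_le_l2 {k : ℕ} (f g : Fin k → ℝ) : |∑ i, f i * g i| ≤ l2 f * l2 g := by
  have h := Finset.sum_mul_sq_le_sq_mul_sq Finset.univ f g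
  have h2 : |∑ i, f i * g i| = Real.sqrt ((∑ i, f i * g i) ^ 2) := (Real.sqrt_sq_eq_abs _).symm
  rw [h2, l2, l2, ← Real.sqrt_mul (by positivity)]
  exact Real.sqrt_le_sqrt h

lemma l2_mulVec_orth {m d : ℕ} (Q : Matrix (Fin m) (Fin d) ℝ) (h : Qᵀ * Q = 1)
    (y : Fin d → ℝ) : l2 (Q *ᵥ y) = l2 y := by
  unfold l2
  congr 1
  have h' : ∀ t u, (∑ p, Q p t * Q p u) = if t = u then (1:ℝ) else 0 := by
    intro t u
    have := congrFun (congrFun h t) u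
    simpa [Matrix.mul_apply, Matrix.transpose_apply, Matrix.one_apply] using this
  calc ∑ p, (Q *ᵥ y) p ^ 2
      = ∑ p, ∑ t, ∑ u, (Q p t * y t) * (Q p u * y u) := by
        simp only [Matrix.mulVec, dotProduct, sq, Finset.sum_mul_sum]
    _ = ∑ t, ∑ u, (∑ p, Q p t * Q p u) * (y t * y u) := by
        rw [Finset.sum_comm]
        refine Finset.sum_congr rfl fun t _ => ?_
        rw [Finset.sum_comm]
        refine Finset.sum_congr rfl fun u _ => ?_
        rw [Finset.sum_mul]
        exact Finset.sum_congr rfl fun p _ => by ring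
    _ = ∑ t, y t ^ 2 := by
        simp only [h']
        simp [sq, Finset.sum_ite_eq, Finset.mul_sum]

lemma single_mulVec {m d : ℕ} (Q : Matrix (Fin m) (Fin d) ℝ) (p : Fin m) :
    (Qᵀ *ᵥ Pi.single p 1) = fun t => Q p t := by
  funext t
  simp [Matrix.mulVec, dotProduct, Pi.single_apply, Finset.sum_ite_eq]

lemma col_entry_sum {m n : ℕ} (w : Fin n → Fin m → ℝ) (p : Fin m) (j : Fin n) :
    (∑ i, Matrix.vecMulVec (w i) (Pi.single i 1)) p j = w j p := by
  rw [Matrix.sum_apply]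
  simp [Matrix.vecMulVec_apply, Pi.single_apply, Finset.sum_ite_eq]


/-- Lemma 3 of the paper: bound on `‖Mv‖_{ℓ∞}`. -/
theorem stmt3 (m n d : ℕ) (hm : 0 < m) (hn : 0 < n) (hd : 0 < d)
    (ν α₁ α₂ : ℝ) (hν : 0 < ν) (hα₁ : 0 < α₁) (hα₂ : 0 < α₂)
    (Q : Fin n → Matrix (Fin m) (Fin d) ℝ)
    (hQortho : ∀ i, (Q i)ᵀ * Q i = 1)
    (hQe : ∀ (p : Fin m) (j : Fin n),
      l2 ((Q j)ᵀ *ᵥ Pi.single p 1) ≤ ν * Real.sqrt ((d : ℝ) / m))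
    (Lstar Sstar S L : Matrix (Fin m) (Fin n) ℝ)
    (hScol : ∀ j : Fin n,
      ((Finset.univ.filter fun i => Sstar i j ≠ 0).card : ℝ) ≤ α₁ * m)
    (hSrow : ∀ i : Fin m,
      ((Finset.univ.filter fun j => Sstar i j ≠ 0).card : ℝ) ≤ α₂ * n)
    (hsupp : supp (Sstar - S) ⊆ supp Sstar)
    (E G F Mm : Matrix (Fin m) (Fin n) ℝ) (s l : ℝ)
    (hE : E = Sstar - S)
    (hG : G = ∑ i, Matrix.vecMulVec
        ((Q i * (Q i)ᵀ) *ᵥ fun p => (L - Lstar) p i) (Pi.single i 1))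
    (hF : F = ∑ i, Matrix.vecMulVec
        ((Q i * (Q i)ᵀ) *ᵥ fun p => (S - Sstar) p i) (Pi.single i 1))
    (hM : Mm = F + G + E)
    (hs : s = linf E)
    (hl : l = ⨆ i, l2 fun p => G p i) :
    ∀ v : Fin n → ℝ,
      vinf (Mm *ᵥ v) ≤
        (ν * Real.sqrt ((d : ℝ) / m) * l + (α₂ + α₁ * ν ^ 2 * d) * s) * n * vinf v := by
  intro v
  haveI : Nonempty (Fin m) := ⟨⟨0, hm⟩⟩
  haveI : Nonempty (Fin n) := ⟨⟨0, hn⟩⟩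
  set C1 : ℝ := ν * Real.sqrt ((d : ℝ) / m) with hC1
  have hC1nn : 0 ≤ C1 := by positivity
  -- basic E facts
  have hEbd : ∀ k j, |E k j| ≤ s := by
    intro k j
    rw [hs, linf]
    calc |E k j| ≤ ⨆ j', |E k j'| :=
        le_ciSup (f := fun j' => |E k j'|) (Finite.bddAbove_range _) j
      _ ≤ ⨆ i, ⨆ j', |E i j'| :=
        le_ciSup (f := fun i => ⨆ j', |E i j'|) (Finite.bddAbove_range _) k
  have hsnn : 0 ≤ s :=
    le_trans (abs_nonneg _) (hEbd (Classical.arbitrary _) (Classical.arbitrary _))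
  have hEzero : ∀ k j, Sstar k j = 0 → E k j = 0 := by
    intro k j h0
    by_contra hne
    have : (k, j) ∈ supp (Sstar - S) := by
      simp only [supp, Set.mem_setOf_eq]
      rw [← hE]; exact hne
    exact (hsupp this) h0
  -- l facts
  have hlbd : ∀ j, l2 (fun p => G p j) ≤ l := by
    intro j
    rw [hl]
    exact le_ciSup (f := fun i => l2 fun p => G p i) (Finite.bddAbove_range _) j
  have hlnn : 0 ≤ l := le_trans (l2_nonneg' _) (hlbd (Classical.arbitrary _))
  -- G entry bound
  have hGbd : ∀ (p : Fin m) (j : Fin n), |G p j| ≤ C1 * l := by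
    intro p j
    set y : Fin d → ℝ := (Q j)ᵀ *ᵥ fun r => (L - Lstar) r j with hy
    have hcol : (fun p' => G p' j) = Q j *ᵥ y := by
      funext p'
      rw [hG, col_entry_sum, hy, Matrix.mulVec_mulVec]
    have hGpj : G p j = ∑ t, (fun t => Q j p t) t * y t := by
      have := congrFun hcol p
      replace this : G p j = (Q j *ᵥ y) p := this
      rw [this, Matrix.mulVec, dotProduct]
    have hl2y : l2 y ≤ l := by
      rw [← l2_mulVec_orth (Q j) (hQortho j) y, ← hcol]
      exact hlbd j
    rw [hGpj]
    calc |∑ t, (fun t => Q j p t) t * y t| ≤ l2 (fun t => Q j p t) * l2 y :=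
          abs_sum_mul_le_l2 _ _
      _ ≤ C1 * l := by
          apply mul_le_mul _ hl2y (l2_nonneg' _) hC1nn
          rw [← _root_.single_mulVec (Q j) p]; exact hQe p j
  -- A entry bound
  have hA : ∀ (j : Fin n) (p k : Fin m), |(Q j * (Q j)ᵀ) p k| ≤ ν ^ 2 * ((d:ℝ)/m) := by
    intro j p k
    have h1 : (Q j * (Q j)ᵀ) p k
        = ∑ t, ((Q j)ᵀ *ᵥ Pi.single p 1) t * ((Q j)ᵀ *ᵥ Pi.single k 1) t := by
      rw [_root_.single_mulVec, _root_.single_mulVec]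
      simp [Matrix.mul_apply, Matrix.transpose_apply]
    rw [h1]
    calc |∑ t, ((Q j)ᵀ *ᵥ Pi.single p 1) t * ((Q j)ᵀ *ᵥ Pi.single k 1) t|
        ≤ l2 ((Q j)ᵀ *ᵥ Pi.single p 1) * l2 ((Q j)ᵀ *ᵥ Pi.single k 1) := abs_sum_mul_le_l2 _ _
      _ ≤ C1 * C1 := mul_le_mul (hQe p j) (hQe k j) (l2_nonneg' _) hC1nn
      _ = ν ^ 2 * ((d:ℝ)/m) := by
          rw [hC1]
          ring_nf
          rw [Real.sq_sqrt (by positivity)]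
          ring
  -- F entry bound
  have hFbd : ∀ (p : Fin m) (j : Fin n), |F p j| ≤ α₁ * ν ^ 2 * d * s := by
    intro p j
    have hFpj : F p j = ∑ k, (Q j * (Q j)ᵀ) p k * (-(E k j)) := by
      rw [hF, col_entry_sum, Matrix.mulVec, dotProduct]
      refine Finset.sum_congr rfl fun k _ => ?_
      rw [hE]
      simp [Matrix.sub_apply]
    rw [hFpj]
    calc |∑ k, (Q j * (Q j)ᵀ) p k * (-(E k j))|
        ≤ ∑ k, |(Q j * (Q j)ᵀ) p k| * |E k j| := by
          refine le_trans (Finset.abs_sum_le_sum_abs _ _) ?_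
          refine Finset.sum_le_sum fun k _ => ?_
          rw [abs_mul, abs_neg]
      _ = ∑ k ∈ Finset.univ.filter (fun k => Sstar k j ≠ 0),
            |(Q j * (Q j)ᵀ) p k| * |E k j| := by
          symm
          apply Finset.sum_subset (Finset.filter_subset _ _)
          intro k _ hk
          simp only [Finset.mem_filter, Finset.mem_univ, true_and, not_not] at hk
          rw [hEzero k j hk]; simp
      _ ≤ (Finset.univ.filter (fun k => Sstar k j ≠ 0)).card • (ν ^ 2 * ((d:ℝ)/m) * s) := by
          apply Finset.sum_le_card_nsmul
          intro k _
          exact mul_le_mul (hA j p k) (hEbd k j) (abs_nonneg _) (by positivity)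
      _ = ((Finset.univ.filter (fun k => Sstar k j ≠ 0)).card : ℝ)
            * (ν ^ 2 * ((d:ℝ)/m) * s) := nsmul_eq_mul _ _
      _ ≤ (α₁ * m) * (ν ^ 2 * ((d:ℝ)/m) * s) :=
          mul_le_mul_of_nonneg_right (hScol j) (by positivity)
      _ = α₁ * ν ^ 2 * d * s := by
          have hm' : (m:ℝ) ≠ 0 := Nat.cast_ne_zero.mpr hm.ne'
          field_simp
  -- E row sum bound
  have hErow : ∀ p : Fin m, ∑ j, |E p j| ≤ α₂ * n * s := by
    intro p
    calc ∑ j, |E p j|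
        = ∑ j ∈ Finset.univ.filter (fun j => Sstar p j ≠ 0), |E p j| := by
          symm
          apply Finset.sum_subset (Finset.filter_subset _ _)
          intro j _ hj
          simp only [Finset.mem_filter, Finset.mem_univ, true_and, not_not] at hj
          rw [hEzero p j hj]; simp
      _ ≤ (Finset.univ.filter (fun j => Sstar p j ≠ 0)).card • s :=
          Finset.sum_le_card_nsmul _ _ _ (fun j _ => hEbd p j)
      _ = ((Finset.univ.filter (fun j => Sstar p j ≠ 0)).card : ℝ) * s := nsmul_eq_mul _ _
      _ ≤ (α₂ * n) * s := mul_le_mul_of_nonneg_right (hSrow p) hsnn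
      _ = α₂ * n * s := by ring
  -- row ℓ1 bound on Mm
  have hrow : ∀ p : Fin m, ∑ j, |Mm p j| ≤ (C1 * l + (α₂ + α₁ * ν ^ 2 * d) * s) * n := by
    intro p
    calc ∑ j, |Mm p j| ≤ ∑ j, (|F p j| + |G p j| + |E p j|) := by
          refine Finset.sum_le_sum fun j _ => ?_
          rw [hM]
          simp only [Matrix.add_apply]
          exact le_trans (abs_add_le _ _) (add_le_add_left (abs_add_le _ _) _)
      _ = (∑ j, |F p j|) + (∑ j, |G p j|) + (∑ j, |E p j|) := by
          rw [Finset.sum_add_distrib, Finset.sum_add_distrib]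
      _ ≤ (∑ j : Fin n, α₁ * ν ^ 2 * d * s) + (∑ j : Fin n, C1 * l) + (α₂ * n * s) := by
          gcongr with j _ j _
          · exact hFbd p j
          · exact hGbd p j
          · exact hErow p
      _ = (C1 * l + (α₂ + α₁ * ν ^ 2 * d) * s) * n := by
          simp [Finset.sum_const, Finset.card_univ]
          ring
  -- final assembly
  have hV : ∀ j, |v j| ≤ vinf v := fun j => le_ciSup (f := fun i => |v i|) (Finite.bddAbove_range _) j
  have hVnn : 0 ≤ vinf v := le_trans (abs_nonneg _) (hV (Classical.arbitrary _))
  rw [vinf]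
  apply ciSup_le
  intro p
  calc |(Mm *ᵥ v) p| ≤ ∑ j, |Mm p j| * |v j| := by
        rw [Matrix.mulVec, dotProduct]
        refine le_trans (Finset.abs_sum_le_sum_abs _ _) ?_
        exact Finset.sum_le_sum fun j _ => le_of_eq (abs_mul _ _)
    _ ≤ ∑ j, |Mm p j| * vinf v := by
        refine Finset.sum_le_sum fun j _ => ?_
        exact mul_le_mul_of_nonneg_left (hV j) (abs_nonneg _)
    _ = (∑ j, |Mm p j|) * vinf v := by rw [Finset.sum_mul]
    _ ≤ ((C1 * l + (α₂ + α₁ * ν ^ 2 * d) * s) * n) * vinf v :=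
        mul_le_mul_of_nonneg_right (hrow p) hVnn
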